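/- Let k be a field, K a finite Galois field extension of k, Λ a k-algebra, and Γ = K ⊗_k Λ. For every finite-dimensional Γ-module M there is an isomorphism of Γ-modules K ⊗_k M ≅ ⨁_{φ ∈ Gal(K/k)} M^φ, where M^φ denotes the twist of M by φ. -/

import Mathlib

open TensorProduct

variable (k K Λ M : Type) [Field k] [Field K] [Algebra k K] [Ring Λ] [Algebra k Λ]
variable [AddCommGroup M] [Module k M] [Module (K ⊗[k] Λ) M] [IsScalarTower k (K ⊗[k] Λ) M]

/-- The action of `λ ∈ Λ` (via `1 ⊗ λ ∈ K ⊗ Λ = Γ`) on a `Γ`-module, as a `k`-linear map. -/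
noncomputable def lamAct (l : Λ) : M →ₗ[k] M where
  toFun m := ((1 : K) ⊗ₜ[k] l : K ⊗[k] Λ) • m
  map_add' := smul_add _
  map_smul' c m := smul_comm _ c m

/-- The action of a pure tensor `x ⊗ λ ∈ Γ = K ⊗ Λ` on `K ⊗ M`, where the `Γ`-module
structure of `K ⊗ M` is given by `(x ⊗ λ) • (y ⊗ m) = (x * y) ⊗ ((1 ⊗ λ) • m)`. -/
noncomputable def gammaAct (x : K) (l : Λ) : K ⊗[k] M →ₗ[k] K ⊗[k] M :=
  TensorProduct.map (LinearMap.mulLeft k x) (lamAct k K Λ M l)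

/-- The candidate isomorphism, `y ⊗ m ↦ (φ ↦ (φ y ⊗ 1) • m)`. -/
noncomputable def eMap : (K ⊗[k] M) →ₗ[k] ((K ≃ₐ[k] K) → M) :=
  TensorProduct.lift
    { toFun := fun y =>
        { toFun := fun m φ => ((φ y ⊗ₜ[k] (1 : Λ) : K ⊗[k] Λ)) • m
          map_add' := fun m m' => by funext φ; simp [smul_add]
          map_smul' := fun c m => by
            funext φ; simp only [RingHom.id_apply, Pi.smul_apply]
            exact smul_comm _ c m }
      map_add' := fun y y' => by
        refine LinearMap.ext fun m => funext fun φ => ?_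
        show ((φ (y + y') ⊗ₜ[k] (1:Λ) : K ⊗[k] Λ)) • m
            = ((φ y ⊗ₜ[k] (1:Λ) : K ⊗[k] Λ)) • m + ((φ y' ⊗ₜ[k] (1:Λ) : K ⊗[k] Λ)) • m
        rw [map_add, add_tmul, add_smul]
      map_smul' := fun c y => by
        refine LinearMap.ext fun m => funext fun φ => ?_
        show ((φ (c • y) ⊗ₜ[k] (1:Λ) : K ⊗[k] Λ)) • m
            = c • (((φ y ⊗ₜ[k] (1:Λ) : K ⊗[k] Λ)) • m)
        rw [map_smul, ← smul_assoc, TensorProduct.smul_tmul'] }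

@[simp] lemma eMap_tmul (y : K) (m : M) (φ : K ≃ₐ[k] K) :
    eMap k K Λ M (y ⊗ₜ[k] m) φ = ((φ y ⊗ₜ[k] (1 : Λ) : K ⊗[k] Λ)) • m := rfl

theorem tensor_iso_directSum_twists [FiniteDimensional k K] [IsGalois k K]
    [FiniteDimensional k M] :
    ∃ e : (K ⊗[k] M) ≃ₗ[k] ((K ≃ₐ[k] K) → M),
      ∀ (x : K) (l : Λ) (t : K ⊗[k] M) (φ : K ≃ₐ[k] K),
        e (gammaAct k K Λ M x l t) φ = ((φ x ⊗ₜ[k] l : K ⊗[k] Λ)) • e t φ := by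
  classical
  set n := Module.finrank k K with hn
  let b : Module.Basis (Fin n) k K := Module.finBasis k K
  let e := eMap k K Λ M
  -- the equivariance property
  have he : ∀ (x : K) (l : Λ) (t : K ⊗[k] M) (φ : K ≃ₐ[k] K),
      e (gammaAct k K Λ M x l t) φ = ((φ x ⊗ₜ[k] l : K ⊗[k] Λ)) • e t φ := by
    intro x l t φ
    induction t using TensorProduct.induction_on with
    | zero => simp
    | tmul y m =>
      show e ((x * y) ⊗ₜ[k] (((1:K) ⊗ₜ[k] l : K ⊗[k] Λ) • m)) φ = _
      show ((φ (x*y) ⊗ₜ[k] (1:Λ) : K ⊗[k] Λ)) • (((1:K) ⊗ₜ[k] l : K ⊗[k] Λ) • m)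
        = ((φ x ⊗ₜ[k] l : K ⊗[k] Λ)) • ((φ y ⊗ₜ[k] (1:Λ) : K ⊗[k] Λ)) • m
      rw [← mul_smul, ← mul_smul, Algebra.TensorProduct.tmul_mul_tmul,
        Algebra.TensorProduct.tmul_mul_tmul, map_mul, mul_one, one_mul, mul_one]
    | add t1 t2 h1 h2 =>
      simp only [map_add, Pi.add_apply, h1, h2, smul_add]
  -- the section map
  let s : (Fin n → M) →ₗ[k] K ⊗[k] M :=
    ∑ i, (TensorProduct.mk k K M (b i)).comp (LinearMap.proj i)
  have hs_apply : ∀ m : Fin n → M, s m = ∑ i, b i ⊗ₜ[k] m i := by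
    intro m; simp [s, LinearMap.sum_apply]
  have hs : Function.Surjective s := by
    rw [← LinearMap.range_eq_top, ← top_le_iff, ← TensorProduct.span_tmul_eq_top k K M,
      Submodule.span_le]
    rintro _ ⟨y, m, rfl⟩
    refine ⟨fun i => b.repr y i • m, ?_⟩
    rw [hs_apply]
    calc ∑ i, b i ⊗ₜ[k] (b.repr y i • m) = ∑ i, (b.repr y i • b i) ⊗ₜ[k] m := by
          simp [smul_tmul]
      _ = y ⊗ₜ[k] m := by rw [← TensorProduct.sum_tmul, b.sum_repr]
  -- cardinality of the Galois group
  have hcard : Fintype.card (K ≃ₐ[k] K) = n := by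
    rw [← Nat.card_eq_fintype_card]; exact IsGalois.card_aut_eq_finrank k K
  -- Dedekind independence of characters
  have hLI : LinearIndependent K (fun φ : K ≃ₐ[k] K => (φ : K → K)) := by
    refine (linearIndependent_monoidHom K K).comp (fun φ : K ≃ₐ[k] K => (φ : K →* K)) ?_
    intro φ ψ h
    exact AlgEquiv.ext fun y => congrFun (congrArg (DFunLike.coe) h) y
  -- the character matrix map is bijective
  let f : ((K ≃ₐ[k] K) → K) →ₗ[K] (Fin n → K) :=
    { toFun := fun d i => ∑ φ, d φ * φ (b i)
      map_add' := fun d d' => by funext i; simp [add_mul, Finset.sum_add_distrib]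
      map_smul' := fun c d => by funext i; simp [Finset.mul_sum, mul_assoc] }
  have hfinj : Function.Injective f := by
    rw [← LinearMap.ker_eq_bot, LinearMap.ker_eq_bot']
    intro d hd
    have hF : (∑ φ : K ≃ₐ[k] K, d φ • (φ : K ≃ₐ[k] K).toLinearMap : K →ₗ[k] K) = 0 := by
      apply b.ext
      intro i
      have : (∑ φ : K ≃ₐ[k] K, d φ * φ (b i)) = 0 := congrFun hd i
      simpa [LinearMap.sum_apply, smul_eq_mul] using this
    have hF' : (∑ φ : K ≃ₐ[k] K, d φ • (φ : K → K)) = 0 := by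
      funext y
      have := congrFun (congrArg DFunLike.coe hF) y
      simpa [LinearMap.sum_apply, smul_eq_mul] using this
    have := Fintype.linearIndependent_iff.mp hLI d ?_
    · funext φ; exact this φ
    · exact hF'
  have hfsurj : Function.Surjective f := by
    refine (LinearMap.injective_iff_surjective_of_finrank_eq_finrank ?_).mp hfinj
    simp [Module.finrank_pi, hcard]
  -- injectivity of e
  have heinj : Function.Injective e := by
    rw [← LinearMap.ker_eq_bot, LinearMap.ker_eq_bot']
    intro t ht
    obtain ⟨m, rfl⟩ := hs t
    suffices hm : m = 0 by rw [hm]; simp [hs_apply]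
    funext i₀
    simp only [Pi.zero_apply]
    obtain ⟨d, hd⟩ := hfsurj (fun j => if j = i₀ then (1 : K) else 0)
    have hdi : ∀ i, (∑ φ : K ≃ₐ[k] K, d φ * φ (b i)) = if i = i₀ then (1:K) else 0 := by
      intro i; exact congrFun hd i
    have key : ∀ φ : K ≃ₐ[k] K, e (s m) φ = ∑ i, ((φ (b i) ⊗ₜ[k] (1:Λ) : K ⊗[k] Λ)) • m i := by
      intro φ
      rw [hs_apply, map_sum]
      simp [e, Finset.sum_apply]
    have h0 : (0 : M) = ∑ φ : K ≃ₐ[k] K, ((d φ ⊗ₜ[k] (1:Λ) : K ⊗[k] Λ)) • e (s m) φ := by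
      rw [ht]; simp
    rw [h0]
    refine Eq.symm ?_
    calc ∑ φ : K ≃ₐ[k] K, ((d φ ⊗ₜ[k] (1:Λ) : K ⊗[k] Λ)) • e (s m) φ
        = ∑ φ : K ≃ₐ[k] K, ∑ i, (((d φ * φ (b i)) ⊗ₜ[k] (1:Λ) : K ⊗[k] Λ)) • m i := by
          refine Finset.sum_congr rfl fun φ _ => ?_
          rw [key φ, Finset.smul_sum]
          refine Finset.sum_congr rfl fun i _ => ?_
          rw [← mul_smul, Algebra.TensorProduct.tmul_mul_tmul, mul_one]
      _ = ∑ i, (((∑ φ : K ≃ₐ[k] K, d φ * φ (b i)) ⊗ₜ[k] (1:Λ) : K ⊗[k] Λ)) • m i := by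
          rw [Finset.sum_comm]
          refine Finset.sum_congr rfl fun i _ => ?_
          rw [← Finset.sum_smul]
          congr 1
          rw [TensorProduct.sum_tmul]
      _ = ∑ i, (((if i = i₀ then (1:K) else 0) ⊗ₜ[k] (1:Λ) : K ⊗[k] Λ)) • m i := by
          refine Finset.sum_congr rfl fun i _ => ?_
          rw [hdi i]
      _ = m i₀ := by
          rw [Finset.sum_eq_single i₀]
          · have h1 : ((if i₀ = i₀ then (1:K) else 0) ⊗ₜ[k] (1:Λ) : K ⊗[k] Λ) = 1 := by
              rw [if_pos rfl, Algebra.TensorProduct.one_def]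
            rw [h1, one_smul]
          · intro i _ hi
            simp [hi]
          · simp
  -- dimensions agree
  have hdim : Module.finrank k (K ⊗[k] M) = Module.finrank k ((K ≃ₐ[k] K) → M) := by
    rw [Module.finrank_tensorProduct, Module.finrank_pi_fintype, Finset.sum_const,
      smul_eq_mul, show (Finset.univ.card : ℕ) = Fintype.card (K ≃ₐ[k] K) from rfl, hcard]
  exact ⟨e.linearEquivOfInjective heinj hdim, fun x l t φ => by
    simpa using he x l t φ⟩
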